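/- Fix positive integers k and n_1,...,n_k with k ≥ 2 and n_i ≤ n_1 for all i. Let S ⊆ Y = P^{n_1} × ... × P^{n_k} be a finite nondegenerate set with e(S) > 0. Then #S ≥ e(S) + n_1 + 1. -/

import Mathlib

open scoped LinearAlgebra.Projectivization
open Projectivization

/-- The multiprojective space `Y = P^{n 0} × ... × P^{n (k-1)}` over `K`,
where `P^m = P(K^{m+1})`. -/
abbrev MultiProj (K : Type*) [Field K] {k : ℕ} (n : Fin k → ℕ) :=
  ∀ i : Fin k, ℙ K (Fin (n i + 1) → K)

/-- A vector representative of the Segre image `ν(x)` of a point `x ∈ Y`: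
the tensor product of representatives of the coordinates. -/
noncomputable def segreVec {K : Type*} [Field K] {k : ℕ} {n : Fin k → ℕ}
    (x : MultiProj K n) : PiTensorProduct K (fun i : Fin k => Fin (n i + 1) → K) :=
  PiTensorProduct.tprod K (fun i => (x i).rep)

/-- `e(S) = #S − 1 − dim⟨ν(S)⟩`, computed as `#S` minus the rank of the linear span
of vector representatives of `ν(S)`. -/
noncomputable def eSet {K : Type*} [Field K] {k : ℕ} {n : Fin k → ℕ}
    (S : Set (MultiProj K n)) : ℕ :=
  S.ncard - Module.finrank K ↥(Submodule.span K (segreVec '' S))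

/-- `S ⊆ Y` is nondegenerate: `π i '' S` spans `P^{n i}` for every `i`. -/
def Nondeg {K : Type*} [Field K] {k : ℕ} {n : Fin k → ℕ}
    (S : Set (MultiProj K n)) : Prop :=
  ∀ i : Fin k, Submodule.span K ((fun x => (x i).rep) '' S) = ⊤

/-- For products of `P^1`'s: `S` is nondegenerate iff each projection has ≥ 2 points. -/
def NondegPts {K : Type*} [Field K] {k : ℕ} {n : Fin k → ℕ}
    (S : Set (MultiProj K n)) : Prop :=
  ∀ i : Fin k, ∃ p ∈ S, ∃ q ∈ S, p i ≠ q i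

/-- `S` is a circuit: linearly dependent, but every proper subset is linearly independent. -/
def IsCircuit {K : Type*} [Field K] {k : ℕ} {n : Fin k → ℕ}
    (S : Set (MultiProj K n)) : Prop :=
  0 < eSet S ∧ ∀ S' : Set (MultiProj K n), S' ⊂ S → eSet S' = 0

/-- `q ∈ P^r` equals `ν(s)` for the point `s ∈ Y`. -/
def IsSegreOf {K : Type*} [Field K] {k : ℕ} {n : Fin k → ℕ}
    (q : ℙ K (PiTensorProduct K (fun i : Fin k => Fin (n i + 1) → K)))
    (s : MultiProj K n) : Prop :=
  ∃ c : K, q.rep = c • segreVec s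

/-- `q ∈ P^r` lies on the Segre variety `ν(Y)`. -/
def InSegre {K : Type*} [Field K] {k : ℕ} {n : Fin k → ℕ}
    (q : ℙ K (PiTensorProduct K (fun i : Fin k => Fin (n i + 1) → K))) : Prop :=
  ∃ y : MultiProj K n, IsSegreOf q y

/-- `S` is minimal: there is no projective line `L ⊆ P^r` contained in the Segre variety
`ν(Y)` meeting `ν(S)` in at least two points. -/
def IsMinimal {K : Type*} [Field K] {k : ℕ} {n : Fin k → ℕ}
    (S : Set (MultiProj K n)) : Prop :=
  ¬ ∃ W : Submodule K (PiTensorProduct K (fun i : Fin k => Fin (n i + 1) → K)),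
      Module.finrank K ↥W = 2 ∧
      (∀ x : ℙ K (PiTensorProduct K (fun i : Fin k => Fin (n i + 1) → K)),
        x.rep ∈ W → InSegre x) ∧
      ∃ x₁ x₂ : ℙ K (PiTensorProduct K (fun i : Fin k => Fin (n i + 1) → K)),
        x₁ ≠ x₂ ∧ x₁.rep ∈ W ∧ x₂.rep ∈ W ∧
        (∃ s₁ ∈ S, IsSegreOf x₁ s₁) ∧ (∃ s₂ ∈ S, IsSegreOf x₂ s₂)

/-- The `X`-rank of a point `q ∈ P^r`: the minimal cardinality of a finite `A ⊆ Y`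
with `q ∈ ⟨ν(A)⟩`. -/
noncomputable def xRank {K : Type*} [Field K] {k : ℕ} {n : Fin k → ℕ}
    (q : ℙ K (PiTensorProduct K (fun i : Fin k => Fin (n i + 1) → K))) : ℕ :=
  sInf {m : ℕ | ∃ A : Set (MultiProj K n), A.Finite ∧ A.ncard = m ∧
    q.rep ∈ Submodule.span K (segreVec '' A)}


set_option maxHeartbeats 1000000 in
private lemma exists_dual_ne_zero' {K : Type*} [Field K] {m : ℕ} (w : Fin m → K) (hw : w ≠ 0) :
    ∃ φ : (Fin m → K) →ₗ[K] K, φ w ≠ 0 := by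
  obtain ⟨j, hj⟩ : ∃ j, w j ≠ 0 := by
    by_contra h
    push_neg at h
    exact hw (funext h)
  exact ⟨LinearMap.proj j, hj⟩

set_option maxHeartbeats 1000000 in
private lemma segre_span_finrank_ge
    {K : Type*} [Field K] {k : ℕ} {n : Fin k → ℕ}
    (i0 : Fin k)
    (S : Set (MultiProj K n)) (hSfin : S.Finite)
    (hnd : Submodule.span K ((fun x => (x i0).rep) '' S) = ⊤) :
    n i0 + 1 ≤ Module.finrank K ↥(Submodule.span K (segreVec '' S)) := by
  classical
  obtain ⟨t, htS, htspan, htli⟩ :=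
    exists_linearIndependent K ((fun x => (x i0).rep) '' S)
  rw [hnd] at htspan
  haveI : Fintype ↥t := (((hSfin.image _).subset htS)).fintype
  set B : Module.Basis ↥t K (Fin (n i0 + 1) → K) :=
    Module.Basis.mk htli (by rw [Subtype.range_coe, htspan]) with hB
  have hcard : Fintype.card ↥t = n i0 + 1 := by
    rw [← Module.finrank_eq_card_basis B, Module.finrank_fin_fun]
  -- lift each element of t to a point of S
  have hlift : ∀ v : ↥t, ∃ x ∈ S, (x i0).rep = (v : Fin (n i0 + 1) → K) :=
    fun v => htS v.2
  choose p hpS hprep using hlift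
  -- segre vectors of p are linearly independent
  have hFind : LinearIndependent K (fun v : ↥t => segreVec (p v)) := by
    rw [Fintype.linearIndependent_iff]
    intro c hsum v₀
    have hphi : ∀ i : Fin k, ∃ φ : (Fin (n i + 1) → K) →ₗ[K] K,
        φ ((p v₀ i).rep) ≠ 0 :=
      fun i => exists_dual_ne_zero' _ (Projectivization.rep_nonzero _)
    choose φ hφ using hphi
    set f : ∀ i : Fin k, (Fin (n i + 1) → K) →ₗ[K] K :=
      Function.update φ i0 (B.coord v₀) with hf
    set Φ : PiTensorProduct K (fun i : Fin k => Fin (n i + 1) → K) →ₗ[K] K :=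
      PiTensorProduct.lift ((MultilinearMap.mkPiAlgebra K (Fin k) K).compLinearMap f) with hΦ
    have hΦapp : ∀ x : MultiProj K n,
        Φ (segreVec x) = ∏ i, f i ((x i).rep) := by
      intro x
      simp [hΦ, segreVec, PiTensorProduct.lift.tprod]
    have hzero : Φ (∑ v, c v • segreVec (p v)) = 0 := by rw [hsum, map_zero]
    rw [map_sum] at hzero
    simp only [map_smul, hΦapp, smul_eq_mul] at hzero
    have hne : (∏ i, f i ((p v₀ i).rep)) ≠ 0 := by
      rw [Finset.prod_ne_zero_iff]
      intro i _
      rcases eq_or_ne i i0 with h | h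
      · subst h
        have heq : f i ((p v₀ i).rep) = B.coord v₀ ((v₀ : Fin (n i + 1) → K)) := by
          rw [hf, Function.update_self, hprep]
        rw [heq]
        have h1 := Module.Basis.mk_coord_apply_eq (v := (Subtype.val : ↥t → (Fin (n i + 1) → K)))
          (hli := htli) (hsp := by rw [Subtype.range_coe, htspan]) v₀
        rw [← hB] at h1
        rw [h1]
        exact one_ne_zero
      · rw [hf, Function.update_of_ne h]
        exact hφ i
    have hothers : ∀ v : ↥t, v ≠ v₀ → c v * ∏ i, f i ((p v i).rep) = 0 := by
      intro v hv
      have hz : f i0 ((p v i0).rep) = 0 := by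
        rw [hf, Function.update_self, hprep]
        have h1 := Module.Basis.mk_coord_apply_ne (v := (Subtype.val : ↥t → (Fin (n i0 + 1) → K)))
          (hli := htli) (hsp := by rw [Subtype.range_coe, htspan]) (i := v₀) (j := v) hv
        rw [← hB] at h1
        exact h1
      rw [Finset.prod_eq_zero (Finset.mem_univ i0) hz, mul_zero]
    rw [Finset.sum_eq_single v₀ (fun v _ hv => hothers v hv) (by simp)] at hzero
    exact (mul_eq_zero.mp hzero).resolve_right hne
  -- conclude
  haveI : FiniteDimensional K ↥(Submodule.span K (segreVec '' S)) :=
    FiniteDimensional.span_of_finite K (hSfin.image segreVec)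
  have hle : Submodule.span K (Set.range fun v : ↥t => segreVec (p v)) ≤
      Submodule.span K (segreVec '' S) := by
    apply Submodule.span_mono
    rintro _ ⟨v, rfl⟩
    exact Set.mem_image_of_mem _ (hpS v)
  have h1 : Module.finrank K ↥(Submodule.span K (Set.range fun v : ↥t => segreVec (p v)))
      = Fintype.card ↥t := finrank_span_eq_card hFind
  have h2 := Submodule.finrank_mono hle
  omega

theorem nondeg_dependent_card_ge
    {K : Type*} [Field K] {k : ℕ} {n : Fin k → ℕ}
    (hk2 : 2 ≤ k) (hn : ∀ i, 0 < n i)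
    (i0 : Fin k) (hmax : ∀ i, n i ≤ n i0)
    (S : Set (MultiProj K n)) (hSfin : S.Finite)
    (hnd : Nondeg S) (hdep : 0 < eSet S) :
    eSet S + n i0 + 1 ≤ S.ncard := by
  have hkey := segre_span_finrank_ge i0 S hSfin (hnd i0)
  unfold eSet at hdep ⊢
  omega
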